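/- For s ≥ 1, consider the f-SAND instance on the Odd graph O_s augmented by a root: O_s has one vertex for each s-element subset of {1,…,2s+1}, two vertices adjacent if and only if the corresponding subsets are disjoint, so n = C(2s+1, s) vertices each of degree s+1; add a root r adjacent to every vertex of O_s; each edge incident to r has cost 2 and each edge of O_s has cost 1; for every edge (u,v) of O_s there is a color C_{uv} = ({u} ∪ N(u)) ∖ {v}, where N(u) is the neighborhood of u in O_s. Then every feasible capacity installation for this instance has cost at least n + 1. -/

import Mathlib

open scoped Classical
open Finset

namespace FSand

variable {V : Type} [Fintype V] [DecidableEq V]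

/-- An edge crosses the cut `(S, Sᶜ)`. -/
def Crossing (S : Finset V) (e : Sym2 V) : Prop :=
  ∃ u v, e = s(u, v) ∧ u ∈ S ∧ v ∉ S

/-- Total capacity installed on edges crossing the cut `(S, Sᶜ)`. -/
noncomputable def cutCap (x : Sym2 V → ℕ) (S : Finset V) : ℕ :=
  ∑ e ∈ Finset.univ.filter (Crossing S), x e

/-- Feasibility of a capacity installation for the f-SAND instance `(G, r, C)`. -/
def Feasible {ι : Type} (G : SimpleGraph V) (r : V) (C : ι → Finset V)
    (x : Sym2 V → ℕ) : Prop :=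
  (∀ e, e ∉ G.edgeSet → x e = 0) ∧
  ∀ S : Finset V, r ∉ S → ∀ i : ι, (C i ∩ S).card ≤ cutCap x S

/-- Cost of a capacity installation. -/
noncomputable def instCost (w : Sym2 V → ℝ) (x : Sym2 V → ℕ) : ℝ :=
  ∑ e : Sym2 V, w e * (x e : ℝ)

/-- Total weight of the edges of a subgraph. -/
noncomputable def subgraphCost (G : SimpleGraph V) (w : Sym2 V → ℝ) (H : G.Subgraph) : ℝ :=
  ∑ e ∈ Finset.univ.filter (· ∈ H.edgeSet), w e

/-- Minimum weight of a connected subgraph of `G` containing all vertices of `T`. -/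
noncomputable def steinerCost (G : SimpleGraph V) (w : Sym2 V → ℝ) (T : Set V) : ℝ :=
  sInf {c | ∃ H : G.Subgraph, H.Connected ∧ T ⊆ H.verts ∧ c = subgraphCost G w H}

/-- Optimal value of the f-SAND instance. -/
noncomputable def OPT {ι : Type} (G : SimpleGraph V) (r : V) (C : ι → Finset V)
    (w : Sym2 V → ℝ) : ℝ :=
  sInf {c | ∃ x : Sym2 V → ℕ, Feasible G r C x ∧ instCost w x = c}

end FSand

namespace FSand

/-- The graph `G'` obtained from `G` by adding a new root vertex (`none`) adjacent to
every vertex of `G`. -/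
def rootJoin {V : Type} (G : SimpleGraph V) : SimpleGraph (Option V) where
  Adj a b :=
    (a = none ∧ ∃ v, b = some v) ∨ (b = none ∧ ∃ u, a = some u) ∨
      (∃ u v, a = some u ∧ b = some v ∧ G.Adj u v)
  symm := by
    constructor
    rintro a b (⟨ha, v, hb⟩ | ⟨hb, u, ha⟩ | ⟨u, v, ha, hb, h⟩)
    · exact Or.inr (Or.inl ⟨ha, v, hb⟩)
    · exact Or.inl ⟨hb, u, ha⟩
    · exact Or.inr (Or.inr ⟨v, u, hb, ha, h.symm⟩)
  loopless := by
    constructor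
    rintro a (⟨ha, v, hb⟩ | ⟨hb, u, ha⟩ | ⟨u, v, ha, hb, h⟩)
    · rw [ha] at hb; cases hb
    · rw [hb] at ha; cases ha
    · rw [ha] at hb; exact G.loopless.irrefl u (by cases hb; exact h)

/-- The Odd graph `O_s`: vertices are the `s`-element subsets of `{1, …, 2s+1}`, two of
them adjacent iff they are disjoint. -/
def oddGraph (s : ℕ) : SimpleGraph {A : Finset (Fin (2 * s + 1)) // A.card = s} where
  Adj A B := Disjoint A.1 B.1 ∧ A ≠ B
  symm := by constructor; rintro A B ⟨h, hne⟩; exact ⟨h.symm, hne.symm⟩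
  loopless := by constructor; rintro A ⟨h, hne⟩; exact hne rfl

end FSand

namespace FSandAux
open FSand

open FSand

variable {W : Type} [Fintype W] [DecidableEq W]

lemma sum_sym2_double (f : Sym2 W → ℕ) (hf : ∀ a, f s(a, a) = 0) :
    ∑ p : W × W, f s(p.1, p.2) = 2 * ∑ e : Sym2 W, f e := by
  have h1 : ∀ p : W × W, f s(p.1, p.2) = f ((fun p : W × W => s(p.1, p.2)) p) := by
    rintro ⟨a, b⟩; rfl
  simp_rw [h1]
  rw [Finset.sum_comp f (fun p : W × W => s(p.1, p.2))]
  have himg : (Finset.univ : Finset (W × W)).image (fun p : W × W => s(p.1, p.2)) = Finset.univ := by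
    apply Finset.eq_univ_of_forall
    intro e
    induction e with
    | _ a b => exact Finset.mem_image.2 ⟨(a, b), Finset.mem_univ _, rfl⟩
  rw [himg, Finset.mul_sum]
  apply Finset.sum_congr rfl
  intro e _
  induction e with
  | _ a b =>
    by_cases hab : a = b
    · subst hab
      have : f s(a, a) = 0 := hf a
      simp [this]
    · have hfib : Finset.univ.filter (fun p : W × W => (fun p : W × W => s(p.1, p.2)) p = s(a, b)) =
          {(a, b), (b, a)} := by
        ext ⟨u, v⟩
        simp only [Finset.mem_filter, Finset.mem_univ, true_and, Finset.mem_insert,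
          Finset.mem_singleton, Prod.mk.injEq]
        constructor
        · intro h
          rcases Sym2.eq_iff.1 h with ⟨rfl, rfl⟩ | ⟨rfl, rfl⟩
          · exact Or.inl ⟨rfl, rfl⟩
          · exact Or.inr ⟨rfl, rfl⟩
        · rintro (⟨rfl, rfl⟩ | ⟨rfl, rfl⟩)
          · rfl
          · exact Sym2.eq_swap
      rw [hfib]
      rw [Finset.card_insert_of_notMem (by simp only [Finset.mem_singleton, Prod.mk.injEq]; rintro ⟨rfl, -⟩; exact hab rfl)]
      · simp [Finset.card_singleton, two_nsmul, two_mul]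

lemma cutCap_eq (x : Sym2 W → ℕ) (S : Finset W) :
    cutCap x S = ∑ a ∈ S, ∑ b ∈ Sᶜ, x s(a, b) := by
  rw [cutCap, ← Finset.sum_product']
  have himg : Finset.univ.filter (Crossing S) = (S ×ˢ Sᶜ).image (fun p => s(p.1, p.2)) := by
    ext e
    simp only [Finset.mem_filter, Finset.mem_univ, true_and, Finset.mem_image,
      Finset.mem_product, Finset.mem_compl, Crossing]
    constructor
    · rintro ⟨u, v, rfl, hu, hv⟩; exact ⟨(u, v), ⟨hu, hv⟩, rfl⟩
    · rintro ⟨⟨u, v⟩, ⟨hu, hv⟩, rfl⟩; exact ⟨u, v, rfl, hu, hv⟩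
  rw [himg, Finset.sum_image]
  rintro ⟨a, b⟩ hab ⟨c, d⟩ hcd h
  simp only [Finset.mem_coe, Finset.mem_product, Finset.mem_compl] at hab hcd
  simp only at h
  rcases Sym2.eq_iff.1 h with ⟨h1, h2⟩ | ⟨h1, h2⟩
  · exact Prod.ext h1 h2
  · exact absurd (h1 ▸ hab.1) hcd.2

lemma filter_card_of_sum_eq_one {α : Type} [Fintype α] [DecidableEq α]
    (f : α → ℕ) (h : ∑ a, f a = 1) :
    (Finset.univ.filter fun a => f a = 1).card = 1 := by
  have hex : ∃ a₀, f a₀ ≠ 0 := by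
    by_contra hc
    push_neg at hc
    rw [Finset.sum_eq_zero (fun a _ => hc a)] at h
    omega
  obtain ⟨a₀, ha₀⟩ := hex
  have h1 : f a₀ = 1 := by
    have hle : f a₀ ≤ ∑ a, f a := Finset.single_le_sum (fun i _ => Nat.zero_le (f i)) (Finset.mem_univ a₀)
    omega
  have hz : ∀ b, b ≠ a₀ → f b = 0 := by
    intro b hb
    by_contra hbne
    have hpair : f a₀ + f b ≤ ∑ a, f a := by
      have := Finset.sum_le_sum_of_subset (f := f) (Finset.subset_univ ({a₀, b} : Finset α))
      rwa [Finset.sum_pair (Ne.symm hb)] at this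
    omega
  have : (Finset.univ.filter fun a => f a = 1) = {a₀} := by
    ext b
    simp only [Finset.mem_filter, Finset.mem_univ, true_and, Finset.mem_singleton]
    constructor
    · intro hb
      by_contra hne
      have := hz b hne
      omega
    · rintro rfl; exact h1
  rw [this, Finset.card_singleton]


open FSand

abbrev V0 (s : ℕ) := {A : Finset (Fin (2 * s + 1)) // A.card = s}

lemma card_V0 (s : ℕ) : Fintype.card (V0 s) = (2 * s + 1).choose s := by
  rw [Fintype.card_subtype]
  have h : (Finset.univ.filter fun A : Finset (Fin (2 * s + 1)) => A.card = s) =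
      Finset.powersetCard s Finset.univ := by
    ext A
    simp [Finset.mem_powersetCard_univ]
  rw [h, Finset.card_powersetCard]
  simp

lemma exists_vertex (s : ℕ) : Nonempty (V0 s) := by
  have h : s ≤ (Finset.univ : Finset (Fin (2 * s + 1))).card := by
    simp; omega
  obtain ⟨t, -, ht⟩ := Finset.exists_subset_card_eq h
  exact ⟨⟨t, ht⟩⟩

lemma odd_two_nbrs (s : ℕ) (hs : 1 ≤ s) (A : V0 s) :
    ∃ B C : V0 s, (oddGraph s).Adj A B ∧ (oddGraph s).Adj A C ∧ B ≠ C := by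
  have hcard : (A.1ᶜ : Finset (Fin (2 * s + 1))).card = s + 1 := by
    rw [Finset.card_compl, A.2]
    simp
    omega
  obtain ⟨a, ha, b, hb, hab⟩ := Finset.one_lt_card.1 (by omega : 1 < (A.1ᶜ).card)
  have hBcard : (A.1ᶜ.erase a).card = s := by
    rw [Finset.card_erase_of_mem ha, hcard]; omega
  have hCcard : (A.1ᶜ.erase b).card = s := by
    rw [Finset.card_erase_of_mem hb, hcard]; omega
  have hAne : A.1.Nonempty := Finset.card_pos.1 (by rw [A.2]; omega)
  have hdisj : ∀ c : Fin (2 * s + 1), Disjoint A.1 (A.1ᶜ.erase c) :=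
    fun c => Finset.disjoint_left.2 fun z hz hz' =>
      (Finset.mem_compl.1 (Finset.mem_of_mem_erase hz')) hz
  have hne : ∀ c : Fin (2 * s + 1), ∀ h : (A.1ᶜ.erase c).card = s,
      A ≠ (⟨A.1ᶜ.erase c, h⟩ : V0 s) := by
    intro c h heq
    obtain ⟨z, hz⟩ := hAne
    have : z ∈ A.1ᶜ.erase c := by
      have := congrArg Subtype.val heq
      simp only at this
      rw [← this]; exact hz
    exact (Finset.mem_compl.1 (Finset.mem_of_mem_erase this)) hz
  refine ⟨⟨A.1ᶜ.erase a, hBcard⟩, ⟨A.1ᶜ.erase b, hCcard⟩,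
    ⟨hdisj a, hne a hBcard⟩, ⟨hdisj b, hne b hCcard⟩, ?_⟩
  intro h
  have hv : A.1ᶜ.erase a = A.1ᶜ.erase b := congrArg Subtype.val h
  have hbmem : b ∈ A.1ᶜ.erase a := Finset.mem_erase.2 ⟨hab.symm, hb⟩
  rw [hv] at hbmem
  exact (Finset.mem_erase.1 hbmem).1 rfl

-- ===== main machinery =====

@[reducible] noncomputable def colors (s : ℕ) (i : {q : V0 s × V0 s // (oddGraph s).Adj q.1 q.2}) :
    Finset (Option (V0 s)) :=
  ((insert i.1.1 ((oddGraph s).neighborFinset i.1.1)).erase i.1.2).image some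

section Main

variable {s : ℕ} (x : Sym2 (Option (V0 s)) → ℕ)

noncomputable def rx (v : V0 s) : ℕ := x s(none, some v)

noncomputable def cv (v : V0 s) : ℕ := cutCap x {some v}

def pend (v : V0 s) : Prop := rx x v = 0 ∧ cv x v = 1

noncomputable def clients (w : V0 s) : Finset (V0 s) :=
  Finset.univ.filter fun u => pend x u ∧ x s(some u, some w) = 1

variable (hsupp : ∀ e, e ∉ (rootJoin (oddGraph s)).edgeSet → x e = 0)
variable (hcut : ∀ S : Finset (Option (V0 s)), none ∉ S →
    ∀ i : {q : V0 s × V0 s // (oddGraph s).Adj q.1 q.2},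
      (colors s i ∩ S).card ≤ cutCap x S)
variable (hs : 1 ≤ s)

set_option linter.unusedSectionVars false

include hsupp in
lemma diag_zero (a : Option (V0 s)) : x s(a, a) = 0 := by
  apply hsupp
  intro h
  exact (rootJoin (oddGraph s)).irrefl ((SimpleGraph.mem_edgeSet _).1 h)

include hsupp in
lemma adj_of_ne {u w : V0 s} (h : x s(some u, some w) ≠ 0) : (oddGraph s).Adj u w := by
  have hedge : s((some u : Option (V0 s)), some w) ∈ (rootJoin (oddGraph s)).edgeSet := by
    by_contra he
    exact h (hsupp _ he)
  have hadj : (rootJoin (oddGraph s)).Adj (some u) (some w) := (SimpleGraph.mem_edgeSet _).1 hedge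
  rcases hadj with ⟨h1, -⟩ | ⟨h1, -⟩ | ⟨a, b, ha, hb, hab⟩
  · cases h1
  · cases h1
  · cases ha; cases hb; exact hab

include hsupp in
lemma cv_eq (v : V0 s) : cv x v = ∑ b : Option (V0 s), x s(some v, b) := by
  rw [cv, cutCap_eq, Finset.sum_singleton]
  have h := Finset.sum_add_sum_compl ({some v} : Finset (Option (V0 s)))
      (fun b => x s(some v, b))
  rw [Finset.sum_singleton, diag_zero x hsupp, zero_add] at h
  exact h

include hsupp in
lemma two_sum_eq : 2 * ∑ e : Sym2 (Option (V0 s)), x e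
    = ∑ v, rx x v + ∑ v, cv x v := by
  rw [← sum_sym2_double x (diag_zero x hsupp)]
  rw [Fintype.sum_prod_type]
  rw [Fintype.sum_option]
  have h1 : ∑ b : Option (V0 s), x s(none, b) = ∑ v, rx x v := by
    rw [Fintype.sum_option, diag_zero x hsupp, zero_add]
    rfl
  have h2 : ∀ u : V0 s, ∑ b : Option (V0 s), x s(some u, b) = cv x u := fun u =>
    (cv_eq x hsupp u).symm
  rw [h1]
  simp_rw [h2]

include hsupp hcut hs in
lemma singleton_le (v : V0 s) : 1 ≤ cv x v := by
  obtain ⟨B, -, hB, -, -⟩ := odd_two_nbrs s hs v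
  have hmem : some v ∈ colors s ⟨(v, B), hB⟩ ∩ {some v} := by
    rw [Finset.mem_inter]
    refine ⟨Finset.mem_image.2 ⟨v, ?_, rfl⟩, Finset.mem_singleton_self _⟩
    exact Finset.mem_erase.2 ⟨hB.ne, Finset.mem_insert_self _ _⟩
  have hle := hcut {some v} (by simp) ⟨(v, B), hB⟩
  exact le_trans (Finset.card_pos.2 ⟨_, hmem⟩) hle

include hsupp hcut hs in
lemma exists_root : ∃ v : V0 s, 1 ≤ rx x v := by
  obtain ⟨w0⟩ := exists_vertex s
  obtain ⟨B, -, hB, -, -⟩ := odd_two_nbrs s hs w0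
  set S : Finset (Option (V0 s)) := Finset.univ.image some with hSdef
  have hnone : (none : Option (V0 s)) ∉ S := by simp [hSdef]
  have hmem : some w0 ∈ colors s ⟨(w0, B), hB⟩ ∩ S := by
    rw [Finset.mem_inter]
    refine ⟨Finset.mem_image.2 ⟨w0, ?_, rfl⟩, Finset.mem_image.2 ⟨w0, Finset.mem_univ _, rfl⟩⟩
    exact Finset.mem_erase.2 ⟨hB.ne, Finset.mem_insert_self _ _⟩
  have hle := hcut S hnone ⟨(w0, B), hB⟩
  have hcap : cutCap x S = ∑ v, rx x v := by
    have hSc : Sᶜ = ({none} : Finset (Option (V0 s))) := by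
      ext b
      cases b <;> simp [hSdef]
    rw [cutCap_eq, hSc]
    rw [Finset.sum_image (fun a _ b _ h => Option.some_injective _ h)]
    apply Finset.sum_congr rfl
    intro v _
    rw [Finset.sum_singleton, rx, Sym2.eq_swap]
  rw [hcap] at hle
  have h1 : 1 ≤ ∑ v, rx x v :=
    le_trans (Finset.card_pos.2 ⟨_, hmem⟩) hle
  by_contra hc
  push_neg at hc
  have : ∀ v : V0 s, rx x v = 0 := fun v => by have := hc v; omega
  rw [Finset.sum_eq_zero (fun v _ => this v)] at h1
  omega

include hsupp in
lemma client_unique {u : V0 s} (hu : pend x u) :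
    (Finset.univ.filter fun w : V0 s => x s(some u, some w) = 1).card = 1 := by
  apply filter_card_of_sum_eq_one
  have hc := cv_eq x hsupp u
  rw [Fintype.sum_option] at hc
  have hr : x s((some u : Option (V0 s)), none) = 0 := by
    rw [Sym2.eq_swap]; exact hu.1
  rw [hr, zero_add] at hc
  rw [← hc]
  exact hu.2

include hsupp in
lemma clients_sum : ∑ w, (clients x w).card = ∑ u, (if pend x u then 1 else 0) := by
  have h1 : ∀ w : V0 s, (clients x w).card
      = ∑ u, if pend x u ∧ x s(some u, some w) = 1 then 1 else 0 := by
    intro w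
    rw [clients, Finset.card_filter]
  simp_rw [h1]
  rw [Finset.sum_comm]
  apply Finset.sum_congr rfl
  intro u _
  by_cases hu : pend x u
  · rw [if_pos hu]
    have h2 : ∀ w : V0 s, (if pend x u ∧ x s(some u, some w) = 1 then 1 else 0)
        = (if x s(some u, some w) = 1 then (1:ℕ) else 0) := by
      intro w
      by_cases hw : x s(some u, some w) = 1 <;> simp [hw, hu]
    simp_rw [h2]
    rw [← Finset.card_filter]
    exact client_unique x hsupp hu
  · have h2 : ∀ w : V0 s, (if pend x u ∧ x s(some u, some w) = 1 then (1:ℕ) else 0) = 0 := by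
      intro w
      simp [hu]
    simp_rw [h2]
    simp [hu]

-- the star set
noncomputable def starSet (w : V0 s) : Finset (Option (V0 s)) :=
  insert (some w) ((clients x w).image some)

include hsupp in
lemma w_not_client (w : V0 s) : w ∉ clients x w := by
  rw [clients, Finset.mem_filter]
  rintro ⟨-, -, h⟩
  rw [diag_zero x hsupp] at h
  exact one_ne_zero h.symm

include hsupp in
lemma some_w_not_img (w : V0 s) : (some w : Option (V0 s)) ∉ (clients x w).image some := by
  rw [Finset.mem_image]
  rintro ⟨u, hu, h⟩
  cases Option.some_injective _ h
  exact w_not_client x hsupp w hu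

include hsupp in
lemma card_starSet (w : V0 s) : (starSet x w).card = (clients x w).card + 1 := by
  rw [starSet, Finset.card_insert_of_notMem (some_w_not_img x hsupp w),
    Finset.card_image_of_injective _ (Option.some_injective _)]

include hsupp in
lemma client_adj {u w : V0 s} (hu : u ∈ clients x w) : (oddGraph s).Adj w u := by
  have h1 : x s(some u, some w) = 1 := (Finset.mem_filter.1 hu).2.2
  exact (adj_of_ne x hsupp (by rw [h1]; exact one_ne_zero)).symm

include hsupp in
lemma starUB (w : V0 s) :
    cutCap x (starSet x w) + (clients x w).card ≤ cv x w := by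
  rw [show starSet x w = insert (some w) ((clients x w).image some) from rfl]
  set T := clients x w with hT
  set S : Finset (Option (V0 s)) := insert (some w) (T.image some) with hS
  have hsub : T.image some ⊆ S := by
    rw [hS]; exact Finset.subset_insert _ _
  rw [cutCap_eq]
  rw [hS, Finset.sum_insert (some_w_not_img x hsupp w)]
  rw [Finset.sum_image (fun a _ b _ h => Option.some_injective _ h)]
  rw [← hS]
  have hcl : ∀ u ∈ T, ∑ b ∈ Sᶜ, x s(some u, b) = 0 := by
    intro u hu
    have hp : pend x u := (Finset.mem_filter.1 hu).2.1
    have h1 : x s(some u, some w) = 1 := (Finset.mem_filter.1 hu).2.2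
    have hwS : (some w : Option (V0 s)) ∈ S := by rw [hS]; exact Finset.mem_insert_self _ _
    have hwSc : (some w : Option (V0 s)) ∉ Sᶜ := by rw [Finset.mem_compl]; exact fun h => h hwS
    have hins : ∑ b ∈ insert (some w) Sᶜ, x s(some u, b)
        ≤ ∑ b : Option (V0 s), x s(some u, b) :=
      Finset.sum_le_sum_of_subset (Finset.subset_univ _)
    rw [Finset.sum_insert hwSc] at hins
    rw [← cv_eq x hsupp u, hp.2, h1] at hins
    omega
  rw [Finset.sum_eq_zero hcl, add_zero]
  -- now: ∑ b ∈ Sᶜ, x s(some w, b) + T.card ≤ cv x w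
  have hdisj : Disjoint (Sᶜ : Finset (Option (V0 s))) (T.image some) := by
    rw [Finset.disjoint_left]
    intro b hb hbT
    exact (Finset.mem_compl.1 hb) (hsub hbT)
  have himg : ∑ b ∈ T.image some, x s(some w, b) = T.card := by
    rw [Finset.sum_image (fun a _ b _ h => Option.some_injective _ h)]
    have : ∀ u ∈ T, x s(some w, some u) = 1 := by
      intro u hu
      rw [Sym2.eq_swap]
      exact (Finset.mem_filter.1 hu).2.2
    rw [Finset.sum_congr rfl this, Finset.sum_const, smul_eq_mul, mul_one]
  have hle : ∑ b ∈ Sᶜ, x s(some w, b) + ∑ b ∈ T.image some, x s(some w, b)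
      ≤ ∑ b : Option (V0 s), x s(some w, b) := by
    rw [← Finset.sum_union hdisj]
    exact Finset.sum_le_sum_of_subset (Finset.subset_univ _)
  rw [himg, ← cv_eq x hsupp w] at hle
  exact hle

include hsupp in
lemma none_not_starSet (w : V0 s) : (none : Option (V0 s)) ∉ starSet x w := by
  rw [starSet, Finset.mem_insert]
  rintro (h | h)
  · cases h
  · rw [Finset.mem_image] at h
    obtain ⟨u, -, h⟩ := h
    cases h

include hsupp hcut in
lemma starLB1 {w v : V0 s} (hadj : (oddGraph s).Adj w v) (hv : v ∉ clients x w) :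
    (clients x w).card + 1 ≤ cutCap x (starSet x w) := by
  have hsub : starSet x w ⊆ colors s ⟨(w, v), hadj⟩ ∩ starSet x w := by
    intro a ha
    rw [Finset.mem_inter]
    refine ⟨?_, ha⟩
    rw [starSet, Finset.mem_insert] at ha
    rcases ha with rfl | ha
    · exact Finset.mem_image.2 ⟨w, Finset.mem_erase.2 ⟨hadj.ne, Finset.mem_insert_self _ _⟩, rfl⟩
    · rw [Finset.mem_image] at ha
      obtain ⟨u, hu, rfl⟩ := ha
      refine Finset.mem_image.2 ⟨u, Finset.mem_erase.2 ⟨?_, ?_⟩, rfl⟩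
      · rintro rfl; exact hv hu
      · exact Finset.mem_insert_of_mem
          ((SimpleGraph.mem_neighborFinset _ _ _).2 (client_adj x hsupp hu))
  have hc := hcut (starSet x w) (none_not_starSet x hsupp w) ⟨(w, v), hadj⟩
  calc (clients x w).card + 1 = (starSet x w).card := (card_starSet x hsupp w).symm
    _ ≤ (colors s ⟨(w, v), hadj⟩ ∩ starSet x w).card := Finset.card_le_card hsub
    _ ≤ cutCap x (starSet x w) := hc

include hsupp hcut in
lemma starLB2 {w v : V0 s} (hadj : (oddGraph s).Adj w v) (hv : v ∈ clients x w) :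
    (clients x w).card ≤ cutCap x (starSet x w) := by
  have hvS : (some v : Option (V0 s)) ∈ starSet x w := by
    rw [starSet]
    exact Finset.mem_insert_of_mem (Finset.mem_image_of_mem _ hv)
  have hsub : (starSet x w).erase (some v) ⊆ colors s ⟨(w, v), hadj⟩ ∩ starSet x w := by
    intro a ha
    rw [Finset.mem_erase] at ha
    obtain ⟨hav, haS⟩ := ha
    rw [Finset.mem_inter]
    refine ⟨?_, haS⟩
    rw [starSet, Finset.mem_insert] at haS
    rcases haS with rfl | haS
    · exact Finset.mem_image.2 ⟨w, Finset.mem_erase.2 ⟨hadj.ne, Finset.mem_insert_self _ _⟩, rfl⟩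
    · rw [Finset.mem_image] at haS
      obtain ⟨u, hu, rfl⟩ := haS
      refine Finset.mem_image.2 ⟨u, Finset.mem_erase.2 ⟨?_, ?_⟩, rfl⟩
      · rintro rfl; exact hav rfl
      · exact Finset.mem_insert_of_mem
          ((SimpleGraph.mem_neighborFinset _ _ _).2 (client_adj x hsupp hu))
  have hc := hcut (starSet x w) (none_not_starSet x hsupp w) ⟨(w, v), hadj⟩
  have hcard : ((starSet x w).erase (some v)).card = (clients x w).card := by
    rw [Finset.card_erase_of_mem hvS, card_starSet x hsupp w]
    omega
  calc (clients x w).card = ((starSet x w).erase (some v)).card := hcard.symm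
    _ ≤ (colors s ⟨(w, v), hadj⟩ ∩ starSet x w).card := Finset.card_le_card hsub
    _ ≤ cutCap x (starSet x w) := hc

include hsupp hcut hs in
lemma star_cases (w : V0 s) (ht : 1 ≤ (clients x w).card) :
    2 * (clients x w).card + 1 ≤ cv x w ∨
      (2 ≤ (clients x w).card ∧ 2 * (clients x w).card ≤ cv x w) := by
  by_cases hex : ∃ v, (oddGraph s).Adj w v ∧ v ∉ clients x w
  · obtain ⟨v, hadj, hv⟩ := hex
    left
    have h1 := starLB1 x hsupp hcut hadj hv
    have h2 := starUB x hsupp w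
    omega
  · push_neg at hex
    obtain ⟨B, C, hB, hC, hBC⟩ := odd_two_nbrs s hs w
    right
    constructor
    · exact Finset.one_lt_card.2 ⟨B, hex B hB, C, hex C hC, hBC⟩
    · have h1 := starLB2 x hsupp hcut hB (hex B hB)
      have h2 := starUB x hsupp w
      omega

include hsupp hcut hs in
lemma pervertex (v : V0 s) :
    2 + (clients x v).card + 2 * min (rx x v) 1
      ≤ cv x v + 3 * rx x v + (if pend x v then 1 else 0) := by
  have hc1 := singleton_le x hsupp hcut hs v
  by_cases hp : pend x v
  · have ht0 : (clients x v).card = 0 := by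
      by_contra h
      have ht : 1 ≤ (clients x v).card := Nat.pos_of_ne_zero h
      rcases star_cases x hsupp hcut hs v ht with h' | ⟨-, h'⟩ <;> (rw [hp.2] at h'; omega)
    rw [hp.1, ht0, hp.2, if_pos hp]
    simp
  · rw [if_neg hp]
    have hm1 : min (rx x v) 1 ≤ 1 := min_le_right _ _
    have hm2 : min (rx x v) 1 ≤ rx x v := min_le_left _ _
    rcases Nat.eq_zero_or_pos (clients x v).card with ht | ht
    · by_cases hr : rx x v = 0
      · have hne : cv x v ≠ 1 := fun h => hp ⟨hr, h⟩
        rw [ht, hr]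
        simp only [Nat.zero_min, Nat.min_zero]
        omega
      · have hm : min (rx x v) 1 = 1 := min_eq_right (by omega)
        rw [ht, hm]
        omega
    · rcases star_cases x hsupp hcut hs v ht with h' | ⟨h2, h'⟩ <;> omega

include hsupp hcut hs in
theorem aux_bound :
    (2 * s + 1).choose s + 1
      ≤ (∑ e : Sym2 (Option (V0 s)), x e) + ∑ v, rx x v := by
  have hsum := Finset.sum_le_sum (s := (Finset.univ : Finset (V0 s)))
    (fun v _ => pervertex x hsupp hcut hs v)
  rw [Finset.sum_add_distrib, Finset.sum_add_distrib, Finset.sum_add_distrib,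
    Finset.sum_add_distrib] at hsum
  -- LHS pieces
  have hconst : ∑ _v : V0 s, 2 = 2 * Fintype.card (V0 s) := by
    rw [Finset.sum_const, smul_eq_mul, Finset.card_univ, mul_comm]
  have hminsum : 1 ≤ ∑ v, min (rx x v) 1 := by
    obtain ⟨v0, hv0⟩ := exists_root x hsupp hcut hs
    have : min (rx x v0) 1 = 1 := min_eq_right (by omega)
    calc 1 = min (rx x v0) 1 := this.symm
      _ ≤ ∑ v, min (rx x v) 1 :=
        Finset.single_le_sum (f := fun v => min (rx x v) 1)
          (fun i _ => Nat.zero_le _) (Finset.mem_univ v0)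
  have hmul : ∑ v, 2 * min (rx x v) 1 = 2 * ∑ v, min (rx x v) 1 := by
    rw [Finset.mul_sum]
  have hmul3 : ∑ v, 3 * rx x v = 3 * ∑ v, rx x v := by
    rw [Finset.mul_sum]
  have hclients := clients_sum x hsupp
  have htwo := two_sum_eq x hsupp
  rw [hconst, hmul, hmul3, hclients] at hsum
  -- hsum : 2 * n + ∑ pend + 2 * ∑ min ≤ ∑ cv + 3 * ∑ rx + ∑ pend
  have hn : Fintype.card (V0 s) = (2 * s + 1).choose s := card_V0 s
  omega

end Main

end FSandAux

set_option maxHeartbeats 1000000 in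
open FSand in
/-- in the f-SAND instance on the Odd graph `O_s` augmented by a root
(root edges of cost 2, graph edges of cost 1), with a color
`C_{uv} = ({u} ∪ N(u)) ∖ {v}` for every edge `(u,v)` of `O_s`, every feasible capacity
installation costs at least `n + 1`, where `n = C(2s+1, s)` is the number of vertices
of `O_s`. -/
theorem stmt_12 (s : ℕ) (hs : 1 ≤ s)
    (x : Sym2 (Option {A : Finset (Fin (2 * s + 1)) // A.card = s}) → ℕ)
    (hfeas : Feasible (rootJoin (oddGraph s))
      (none : Option {A : Finset (Fin (2 * s + 1)) // A.card = s})
      (fun e : {q : {A : Finset (Fin (2 * s + 1)) // A.card = s} ×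
                    {A : Finset (Fin (2 * s + 1)) // A.card = s} //
                  (oddGraph s).Adj q.1 q.2} =>
        ((insert e.1.1 ((oddGraph s).neighborFinset e.1.1)).erase e.1.2).image some)
      x) :
    ((2 * s + 1).choose s : ℝ) + 1 ≤
      instCost (fun e => if (none : Option _) ∈ e then 2 else 1) x := by
  classical
  have hsupp := hfeas.1
  have hcut : ∀ S : Finset (Option (FSandAux.V0 s)), none ∉ S →
      ∀ i : {q : FSandAux.V0 s × FSandAux.V0 s // (oddGraph s).Adj q.1 q.2},
        (FSandAux.colors s i ∩ S).card ≤ cutCap x S := fun S hS i => hfeas.2 S hS i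
  have key := FSandAux.aux_bound x hsupp hcut hs
  have hA : ∑ e ∈ Finset.univ.filter
        (fun e : Sym2 (Option (FSandAux.V0 s)) => (none : Option (FSandAux.V0 s)) ∈ e), x e
      = ∑ v : FSandAux.V0 s, x s(none, some v) := by
    have himg : (Finset.univ.filter
          fun e : Sym2 (Option (FSandAux.V0 s)) => (none : Option (FSandAux.V0 s)) ∈ e)
        = Finset.univ.image (fun b : Option (FSandAux.V0 s) =>
            s((none : Option (FSandAux.V0 s)), b)) := by
      ext e
      simp only [Finset.mem_filter, Finset.mem_univ, true_and, Finset.mem_image]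
      rw [Sym2.mem_iff_exists]
      constructor
      · rintro ⟨b, rfl⟩; exact ⟨b, rfl⟩
      · rintro ⟨b, rfl⟩; exact ⟨b, rfl⟩
    rw [himg, Finset.sum_image (fun a _ b _ h => Sym2.congr_right.1 h)]
    rw [Fintype.sum_option]
    rw [FSandAux.diag_zero x hsupp, zero_add]
  have hcost : instCost (fun e => if (none : Option (FSandAux.V0 s)) ∈ e then (2:ℝ) else 1) x
      = ((∑ e : Sym2 (Option (FSandAux.V0 s)), x e : ℕ) : ℝ)
        + ((∑ v : FSandAux.V0 s, x s(none, some v) : ℕ) : ℝ) := by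
    rw [instCost]
    have hsplit : ∀ e : Sym2 (Option (FSandAux.V0 s)),
        (if (none : Option (FSandAux.V0 s)) ∈ e then (2:ℝ) else 1) * (x e : ℝ)
        = (x e : ℝ) + (if (none : Option (FSandAux.V0 s)) ∈ e then (x e : ℝ) else 0) := by
      intro e
      by_cases h : (none : Option (FSandAux.V0 s)) ∈ e <;> simp [h] <;> ring
    simp_rw [hsplit]
    rw [Finset.sum_add_distrib]
    congr 1
    · rw [Nat.cast_sum]
    · rw [← Finset.sum_filter]
      rw [← Nat.cast_sum, hA, Nat.cast_sum]
  rw [hcost]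
  have key2 : (2 * s + 1).choose s + 1
      ≤ (∑ e : Sym2 (Option (FSandAux.V0 s)), x e) + ∑ v : FSandAux.V0 s, x s(none, some v) :=
    key
  exact_mod_cast key2
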